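/- For integers k ≥ 2 and n ≥ 3k, F(k, n+k) + F(k, n-k) = F(k, n-k) + F(k, n) + ∑_{i=0}^{k-1} F(k, n-i). -/
import Mathlib


def genFib (k n : ℕ) : ℕ :=
  if h1 : n < k then n + 1
  else if h2 : k = 0 then 0
  else genFib k (n - 1) + genFib k (n - k)
  termination_by n
  decreasing_by all_goals omega

def genLucas (k n : ℕ) : ℕ :=
  if n < 2 * k then n + 1
  else (k - 1) * genFib k (n - (2 * k - 1)) + genFib k (n - (k - 1))

lemma genFib_rec (k m : ℕ) (hk : 0 < k) (hm : k ≤ m) :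
    genFib k m = genFib k (m - 1) + genFib k (m - k) := by
  rw [genFib]
  rw [dif_neg (by omega), dif_neg (by omega)]

lemma genFib_aux (k n : ℕ) (hk : 2 ≤ k) (hn : k ≤ n) :
    ∀ j, j ≤ k → genFib k (n + j)
      = genFib k n + ∑ i ∈ Finset.Ico (k - j) k, genFib k (n - i) := by
  intro j
  induction j with
  | zero => simp
  | succ j ih =>
    intro hj
    rw [genFib_rec k (n + (j + 1)) (by omega) (by omega)]
    have h1 : n + (j + 1) - 1 = n + j := by omega
    have h2 : n + (j + 1) - k = n - (k - 1 - j) := by omega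
    rw [h1, h2, show k - (j + 1) = k - 1 - j by omega,
      Finset.sum_eq_sum_Ico_succ_bot (by omega) (fun i => genFib k (n - i)),
      show k - 1 - j + 1 = k - j by omega, ih (by omega)]
    ring

theorem stmt14 (k n : ℕ) (hk : 2 ≤ k) (hn : 3 * k ≤ n) :
    genFib k (n + k) + genFib k (n - k)
      = genFib k (n - k) + genFib k n + ∑ i ∈ Finset.range k, genFib k (n - i) := by
  have := genFib_aux k n hk (by omega) k le_rfl
  rw [show k - k = 0 by omega] at this
  rw [← Finset.range_eq_Ico] at this
  omega
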